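/- For every ν : ℕ → ℤ, the infinite product f_ν(z) = ∏_{k=1}^∞ E_{m_k}(z/k)^{ν(k)}, with m_k = k + ⌈max(0, log|ν(k)|)⌉, converges locally uniformly on ℂ \ {k ∈ ℕ : ν(k) ≠ 0} to a holomorphic nowhere-vanishing function on ℂ \ {k : k ≥ 1}. -/

import Mathlib

open Filter

/-- The Weierstrass factor `E_m(z) = (1 - z) * exp(∑_{j=1}^m z^j / j)`. -/
noncomputable def weierstrassFactor (m : ℕ) (z : ℂ) : ℂ :=
  (1 - z) * Complex.exp (∑ j ∈ Finset.Icc 1 m, z ^ j / j)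

/-- `m_k^ν = k + ⌈max(0, log |ν(k)|)⌉`. -/
noncomputable def mExp (ν : ℕ → ℤ) (k : ℕ) : ℕ :=
  k + ⌈max 0 (Real.log |(ν k : ℝ)|)⌉₊

open Filter Finset Metric Complex

/-- The "log" of the Weierstrass factor. -/
noncomputable def wLog (m : ℕ) (w : ℂ) : ℂ :=
  Complex.log (1 - w) + ∑ j ∈ Finset.Icc 1 m, w ^ j / j

lemma wf_eq_exp {m : ℕ} {w : ℂ} (hw : ‖w‖ < 1) :
    weierstrassFactor m w = Complex.exp (wLog m w) := by
  have h1 : (1 : ℂ) - w ≠ 0 := by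
    intro h
    rw [sub_eq_zero] at h
    rw [← h] at hw
    simp at hw
  rw [wLog, Complex.exp_add, Complex.exp_log h1, weierstrassFactor]

lemma wf_zpow_eq {m : ℕ} {w : ℂ} (hw : ‖w‖ < 1) (n : ℤ) :
    weierstrassFactor m w ^ n = Complex.exp ((n : ℂ) * wLog m w) := by
  rw [wf_eq_exp hw, Complex.exp_int_mul]

lemma wf_ne_zero {m : ℕ} {w : ℂ} (hw : w ≠ 1) : weierstrassFactor m w ≠ 0 := by
  refine mul_ne_zero ?_ (Complex.exp_ne_zero _)
  rw [sub_ne_zero]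
  exact fun h => hw h.symm

lemma wf_differentiable (m : ℕ) : Differentiable ℂ (weierstrassFactor m) := by
  refine ((differentiable_const 1).sub differentiable_id).mul (Differentiable.cexp ?_)
  exact Differentiable.fun_sum fun j hj => (differentiable_pow j).div_const _

/-- The key norm bound on `wLog`. -/
lemma norm_wLog_le {m : ℕ} {w : ℂ} (hw : ‖w‖ ≤ 1 / 2) :
    ‖wLog m w‖ ≤ 2 * ‖w‖ ^ (m + 1) := by
  have hw1 : ‖w‖ < 1 := lt_of_le_of_lt hw (by norm_num)
  have hs := Complex.hasSum_taylorSeries_neg_log hw1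
  have hsum : ∑ i ∈ Finset.range (m + 1), w ^ i / i = ∑ i ∈ Finset.Icc 1 m, w ^ i / i := by
    refine (Finset.sum_subset ?_ ?_).symm
    · intro i hi
      simp only [Finset.mem_Icc] at hi
      exact Finset.mem_range.2 (by omega)
    · intro i hi hni
      simp only [Finset.mem_range] at hi
      simp only [Finset.mem_Icc] at hni
      have : i = 0 := by omega
      simp [this]
  have htail : HasSum (fun n : ℕ => w ^ (n + (m + 1)) / (n + (m + 1) : ℕ))
      (-Complex.log (1 - w) - ∑ i ∈ Finset.Icc 1 m, w ^ i / i) := by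
    rw [← hsum]
    exact ((hasSum_nat_add_iff' (m + 1)).2 hs)
  have hbound : ∀ n : ℕ, ‖w ^ (n + (m + 1)) / (n + (m + 1) : ℕ)‖ ≤ ‖w‖ ^ (m+1) * (1/2) ^ n := by
    intro n
    rw [norm_div, norm_pow]
    have h1 : (1:ℝ) ≤ ‖((n + (m + 1) : ℕ) : ℂ)‖ := by
      rw [Complex.norm_natCast]
      exact_mod_cast Nat.one_le_iff_ne_zero.2 (by omega)
    calc ‖w‖ ^ (n + (m + 1)) / ‖((n + (m + 1) : ℕ) : ℂ)‖
        ≤ ‖w‖ ^ (n + (m + 1)) / 1 := by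
          apply div_le_div_of_nonneg_left (by positivity) (by norm_num) h1
      _ = ‖w‖ ^ (m + 1) * ‖w‖ ^ n := by rw [div_one, add_comm, pow_add]
      _ ≤ ‖w‖ ^ (m + 1) * (1/2) ^ n := by
          gcongr
  have hg : HasSum (fun n : ℕ => ‖w‖ ^ (m+1) * (1/2) ^ n) (‖w‖ ^ (m+1) * 2) := by
    have h := (hasSum_geometric_of_lt_one (by norm_num : (0:ℝ) ≤ 1/2) (by norm_num)).mul_left
      (‖w‖ ^ (m+1))
    convert h using 2
    · rfl
    · norm_num
  have := tsum_of_norm_bounded hg hbound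
  rw [htail.tsum_eq] at this
  calc ‖wLog m w‖ = ‖-Complex.log (1 - w) - ∑ i ∈ Finset.Icc 1 m, w ^ i / i‖ := by
        rw [wLog, ← norm_neg]; congr 1; ring
    _ ≤ ‖w‖ ^ (m+1) * 2 := this
    _ = 2 * ‖w‖ ^ (m+1) := by ring

noncomputable def wp (ν : ℕ → ℤ) (n : ℕ) (z : ℂ) : ℂ :=
  ∏ k ∈ Finset.Icc 1 n, weierstrassFactor (mExp ν k) (z / k) ^ (ν k)

noncomputable def flim (ν : ℕ → ℤ) (z : ℂ) : ℂ := limUnder atTop (fun n => wp ν n z)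

noncomputable def NN (r : ℝ) : ℕ := max 1 ⌈3 * r⌉₊

open Classical in
noncomputable def gf (ν : ℕ → ℤ) (r : ℝ) (k : ℕ) (z : ℂ) : ℂ :=
  if k ≤ NN r then 0 else (ν k : ℂ) * wLog (mExp ν k) (z / k)

noncomputable def GG (ν : ℕ → ℤ) (r : ℝ) (z : ℂ) : ℂ := ∑' k, gf ν r k z

noncomputable def uu (r : ℝ) (k : ℕ) : ℝ := if k ≤ NN r then 0 else 2 * (1/3 : ℝ) ^ (k + 1)

lemma NN_lt {r : ℝ} {k : ℕ} (hk : NN r < k) : 3 * r < k := by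
  have h1 : ⌈3 * r⌉₊ < k := lt_of_le_of_lt (le_max_right _ _) hk
  calc 3 * r ≤ ⌈3 * r⌉₊ := Nat.le_ceil _
    _ < k := by exact_mod_cast h1

lemma kpos {r : ℝ} {k : ℕ} (hr : 0 < r) (hk : NN r < k) : (0:ℝ) < k :=
  lt_trans (by linarith [NN_lt hk]) (NN_lt hk)

lemma norm_div_nat {z : ℂ} {k : ℕ} (hk : k ≠ 0) : ‖z / (k:ℂ)‖ = ‖z‖ / k := by
  rw [norm_div, Complex.norm_natCast]

lemma norm_zk_le {r : ℝ} {k : ℕ} {z : ℂ} (hr : 0 < r) (hk : NN r < k) (hz : ‖z‖ < r) :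
    ‖z / (k:ℂ)‖ ≤ 1/3 := by
  have h3 : 3 * r < k := NN_lt hk
  have hkp : (0:ℝ) < k := kpos hr hk
  have hk0 : k ≠ 0 := by
    have h1 : 1 ≤ NN r := le_max_left _ _
    omega
  rw [norm_div_nat hk0]
  rw [div_le_iff₀ hkp]
  nlinarith [norm_nonneg z]

lemma summable_uu (r : ℝ) : Summable (uu r) := by
  have hg : Summable (fun k : ℕ => (1/3 : ℝ) ^ k) :=
    summable_geometric_of_lt_one (by norm_num) (by norm_num)
  have hsum : Summable (fun k : ℕ => 2 * (1/3 : ℝ) ^ (k + 1)) :=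
    (hg.mul_left (2 * (1/3))).congr fun k => by rw [pow_succ]; ring
  refine Summable.of_nonneg_of_le (fun k => ?_) (fun k => ?_) hsum
  · unfold uu; split <;> positivity
  · unfold uu; split
    · positivity
    · exact le_rfl

lemma gf_bound (ν : ℕ → ℤ) {r : ℝ} (hr : 0 < r) (k : ℕ) {z : ℂ} (hz : ‖z‖ < r) :
    ‖gf ν r k z‖ ≤ uu r k := by
  unfold gf uu
  split
  · simp
  · rename_i hk
    push_neg at hk
    by_cases hν : ν k = 0
    · simp only [hν, Int.cast_zero, zero_mul, norm_zero]
      positivity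
    · have hw3 : ‖z / (k:ℂ)‖ ≤ 1/3 := norm_zk_le hr hk hz
      have hw2 : ‖z / (k:ℂ)‖ ≤ 1/2 := le_trans hw3 (by norm_num)
      have hL := norm_wLog_le (m := mExp ν k) hw2
      rw [norm_mul]
      have hν1 : (1:ℝ) ≤ |(ν k : ℝ)| := by
        rw [← Int.cast_abs]
        exact_mod_cast Int.one_le_abs (by exact_mod_cast hν)
      set c := ⌈max 0 (Real.log |(ν k : ℝ)|)⌉₊ with hc
      have hm : mExp ν k + 1 = (k + 1) + c := by rw [mExp]; ring
      have hpow : ‖z / (k:ℂ)‖ ^ (mExp ν k + 1) ≤ (1/3:ℝ) ^ (k+1) * (1/3:ℝ) ^ c := by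
        rw [hm, pow_add]
        gcongr <;> first | exact norm_nonneg _ | exact hw3 | skip
      have hkey : |(ν k : ℝ)| * (1/3:ℝ) ^ c ≤ 1 := by
        have hexp3 : Real.exp 1 ≤ 3 := by
          have := Real.exp_one_lt_d9
          linarith
        have h13 : (1/3 : ℝ) ≤ (Real.exp 1)⁻¹ := by
          rw [show (1/3:ℝ) = 3⁻¹ by norm_num]
          exact inv_anti₀ (Real.exp_pos 1) hexp3
        have h1 : ((1/3:ℝ)) ^ c ≤ ((Real.exp 1)⁻¹) ^ c := by
          gcongr
        have h2 : ((Real.exp 1)⁻¹) ^ c = Real.exp (-(c:ℝ)) := by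
          rw [← Real.exp_neg, ← Real.exp_nat_mul]
          norm_num
        have h3 : Real.log |(ν k : ℝ)| ≤ (c:ℝ) :=
          le_trans (le_max_right _ _) (Nat.le_ceil _)
        have h4 : Real.exp (-(c:ℝ)) ≤ Real.exp (-(Real.log |(ν k : ℝ)|)) :=
          Real.exp_le_exp.2 (by linarith)
        have h5 : Real.exp (-(Real.log |(ν k : ℝ)|)) = |(ν k : ℝ)|⁻¹ := by
          rw [Real.exp_neg, Real.exp_log (by linarith)]
        calc |(ν k : ℝ)| * (1/3:ℝ) ^ c ≤ |(ν k : ℝ)| * |(ν k : ℝ)|⁻¹ := by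
              have hh : ((1/3:ℝ)) ^ c ≤ |(ν k : ℝ)|⁻¹ := by
                rw [← h5]
                exact le_trans (le_trans h1 (le_of_eq h2)) h4
              exact mul_le_mul_of_nonneg_left hh (by linarith)
          _ = 1 := mul_inv_cancel₀ (by linarith)
      have hnn : ‖((ν k : ℂ))‖ = |(ν k : ℝ)| := by
        rw [← Complex.ofReal_intCast, Complex.norm_real, Real.norm_eq_abs]
      calc ‖(ν k : ℂ)‖ * ‖wLog (mExp ν k) (z / k)‖
          ≤ |(ν k : ℝ)| * (2 * ‖z / (k:ℂ)‖ ^ (mExp ν k + 1)) := by rw [hnn]; gcongr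
        _ ≤ |(ν k : ℝ)| * (2 * ((1/3:ℝ) ^ (k+1) * (1/3:ℝ) ^ c)) := by gcongr
        _ = 2 * (1/3:ℝ) ^ (k+1) * (|(ν k : ℝ)| * (1/3:ℝ) ^ c) := by ring
        _ ≤ 2 * (1/3:ℝ) ^ (k+1) * 1 := by
              have h6 : (0:ℝ) ≤ 2 * (1/3:ℝ) ^ (k+1) := by positivity
              exact mul_le_mul_of_nonneg_left hkey h6
        _ = 2 * (1/3:ℝ) ^ (k+1) := by ring
lemma Icc_one_eq_Ioc (n : ℕ) : Finset.Icc 1 n = Finset.Ioc 0 n := by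
  rw [← Finset.Icc_add_one_left_eq_Ioc, zero_add]

lemma norm_zk_lt_one {r : ℝ} {k : ℕ} {z : ℂ} (hr : 0 < r) (hk : NN r < k) (hz : ‖z‖ < r) :
    ‖z / (k:ℂ)‖ < 1 :=
  lt_of_le_of_lt (norm_zk_le hr hk hz) (by norm_num)

lemma wp_eq (ν : ℕ → ℤ) {r : ℝ} (hr : 0 < r) {n : ℕ} (hn : NN r ≤ n) {z : ℂ}
    (hz : ‖z‖ < r) :
    wp ν n z = wp ν (NN r) z * Complex.exp (∑ k ∈ Finset.range (n + 1), gf ν r k z) := by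
  have key : ∀ k ∈ Finset.Ioc (NN r) n,
      weierstrassFactor (mExp ν k) (z / k) ^ (ν k) = Complex.exp (gf ν r k z) := by
    intro k hk
    rw [Finset.mem_Ioc] at hk
    rw [gf, if_neg (not_le.2 hk.1)]
    exact wf_zpow_eq (norm_zk_lt_one hr hk.1 hz) (ν k)
  have hsub : Finset.Ioc (NN r) n ⊆ Finset.range (n + 1) := by
    intro k hk
    rw [Finset.mem_Ioc] at hk
    exact Finset.mem_range.2 (by omega)
  have hzero : ∀ k ∈ Finset.range (n + 1), k ∉ Finset.Ioc (NN r) n → gf ν r k z = 0 := by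
    intro k hk hnk
    rw [Finset.mem_range] at hk
    rw [Finset.mem_Ioc] at hnk
    push_neg at hnk
    rcases le_or_gt k (NN r) with h | h
    · rw [gf, if_pos h]
    · exact absurd (hnk h) (by omega)
  calc wp ν n z = ∏ k ∈ Finset.Ioc 0 n, weierstrassFactor (mExp ν k) (z / k) ^ (ν k) := by
        rw [wp, Icc_one_eq_Ioc]
    _ = (∏ k ∈ Finset.Ioc 0 (NN r), weierstrassFactor (mExp ν k) (z / k) ^ (ν k)) *
        ∏ k ∈ Finset.Ioc (NN r) n, weierstrassFactor (mExp ν k) (z / k) ^ (ν k) := by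
        rw [Finset.prod_Ioc_consecutive _ (Nat.zero_le _) hn]
    _ = wp ν (NN r) z * Complex.exp (∑ k ∈ Finset.range (n + 1), gf ν r k z) := by
        rw [wp, Icc_one_eq_Ioc]
        congr 1
        rw [Finset.prod_congr rfl key, ← Complex.exp_sum,
          Finset.sum_subset hsub hzero]

lemma summable_gf (ν : ℕ → ℤ) {r : ℝ} (hr : 0 < r) {z : ℂ} (hz : ‖z‖ < r) :
    Summable (fun k => gf ν r k z) :=
  Summable.of_norm_bounded (summable_uu r) (fun k => gf_bound ν hr k hz)

lemma tendsto_wp (ν : ℕ → ℤ) {r : ℝ} (hr : 0 < r) {z : ℂ} (hz : ‖z‖ < r) :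
    Tendsto (fun n => wp ν n z) atTop
      (nhds (wp ν (NN r) z * Complex.exp (GG ν r z))) := by
  have hsum := (summable_gf ν hr hz).hasSum.tendsto_sum_nat
  have h1 : Tendsto (fun n => ∑ k ∈ Finset.range (n + 1), gf ν r k z) atTop
      (nhds (GG ν r z)) := hsum.comp (tendsto_add_atTop_nat 1)
  have h2 : Tendsto (fun n => wp ν (NN r) z *
      Complex.exp (∑ k ∈ Finset.range (n + 1), gf ν r k z)) atTop
      (nhds (wp ν (NN r) z * Complex.exp (GG ν r z))) :=
    (h1.cexp).const_mul _
  refine h2.congr' ?_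
  filter_upwards [eventually_ge_atTop (NN r)] with n hn
  exact (wp_eq ν hr hn hz).symm

lemma flim_eq (ν : ℕ → ℤ) {r : ℝ} (hr : 0 < r) {z : ℂ} (hz : ‖z‖ < r) :
    flim ν z = wp ν (NN r) z * Complex.exp (GG ν r z) :=
  (tendsto_wp ν hr hz).limUnder_eq

lemma tu_sums (ν : ℕ → ℤ) {r : ℝ} (hr : 0 < r) :
    TendstoUniformlyOn (fun n z => ∑ k ∈ Finset.range n, gf ν r k z) (GG ν r) atTop
      (Metric.ball (0:ℂ) r) := by
  apply tendstoUniformlyOn_tsum_nat (summable_uu r)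
  intro k z hz
  rw [Metric.mem_ball, dist_zero_right] at hz
  exact gf_bound ν hr k hz

lemma GG_bound (ν : ℕ → ℤ) {r : ℝ} (hr : 0 < r) {z : ℂ} (hz : ‖z‖ < r) :
    ‖GG ν r z‖ ≤ ∑' k, uu r k :=
  tsum_of_norm_bounded (summable_uu r).hasSum (fun k => gf_bound ν hr k hz)

lemma gf_diff (ν : ℕ → ℤ) {r : ℝ} (hr : 0 < r) (k : ℕ) :
    DifferentiableOn ℂ (gf ν r k) (Metric.ball (0:ℂ) r) := by
  rcases le_or_gt k (NN r) with h | h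
  · have : gf ν r k = fun _ => 0 := by
      funext z; rw [gf, if_pos h]
    rw [this]; exact differentiableOn_const 0
  · have hk0 : (k:ℂ) ≠ 0 := by
      have h1 : 1 ≤ NN r := le_max_left _ _
      exact_mod_cast Nat.cast_ne_zero.2 (by omega)
    have heq : gf ν r k = fun z => (ν k : ℂ) * wLog (mExp ν k) (z / k) := by
      funext z; rw [gf, if_neg (not_le.2 h)]
    rw [heq]
    apply DifferentiableOn.const_mul
    intro z hz
    rw [Metric.mem_ball, dist_zero_right] at hz
    apply DifferentiableAt.differentiableWithinAt
    have hzk : ‖z / (k:ℂ)‖ ≤ 1/3 := norm_zk_le hr h hz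
    have hdiv : DifferentiableAt ℂ (fun z : ℂ => z / (k:ℂ)) z :=
      (differentiableAt_id.div_const _)
    refine DifferentiableAt.add ?_ ?_
    · refine DifferentiableAt.clog ((differentiableAt_const 1).sub hdiv) ?_
      rw [Complex.mem_slitPlane_iff]
      left
      have hre : (z / (k:ℂ)).re ≤ 1/3 := le_trans (Complex.re_le_norm _) hzk
      simp only [Complex.sub_re, Complex.one_re]
      linarith
    · exact DifferentiableAt.fun_sum fun j hj => ((hdiv.pow j).div_const _)

lemma GG_diff (ν : ℕ → ℤ) {r : ℝ} (hr : 0 < r) :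
    DifferentiableOn ℂ (GG ν r) (Metric.ball (0:ℂ) r) := by
  apply (tu_sums ν hr).tendstoLocallyUniformlyOn.differentiableOn ?_ Metric.isOpen_ball
  filter_upwards with n
  exact DifferentiableOn.fun_sum fun k _ => gf_diff ν hr k
lemma tu_cexp {F : ℕ → ℂ → ℂ} {G : ℂ → ℂ} {s : Set ℂ} {C : ℝ}
    (h : TendstoUniformlyOn F G atTop s) (hC : ∀ z ∈ s, ‖G z‖ ≤ C) :
    TendstoUniformlyOn (fun n z => Complex.exp (F n z)) (fun z => Complex.exp (G z))
      atTop s := by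
  rw [Metric.tendstoUniformlyOn_iff] at h ⊢
  intro ε hε
  have hc : (0:ℝ) < 2 * Real.exp C + 1 := by positivity
  filter_upwards [h (min 1 (ε / (2 * Real.exp C + 1))) (lt_min one_pos (by positivity))]
    with n hn z hz
  have h1 := hn z hz
  rw [dist_comm] at h1
  have hd1 : dist (F n z) (G z) < 1 := lt_of_lt_of_le h1 (min_le_left _ _)
  have hd2 : dist (F n z) (G z) < ε / (2 * Real.exp C + 1) :=
    lt_of_lt_of_le h1 (min_le_right _ _)
  have hdist : dist (F n z) (G z) = ‖F n z - G z‖ := dist_eq_norm _ _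
  have hsplit : Complex.exp (G z) - Complex.exp (F n z)
      = Complex.exp (G z) * (1 - Complex.exp (F n z - G z)) := by
    rw [mul_sub, mul_one, ← Complex.exp_add]
    ring_nf
  rw [dist_eq_norm, hsplit, norm_mul]
  have hb : ‖1 - Complex.exp (F n z - G z)‖ ≤ 2 * ‖F n z - G z‖ := by
    rw [norm_sub_rev]
    exact Complex.norm_exp_sub_one_le
      (by rw [← hdist]; exact le_of_lt hd1)
  have hG : ‖Complex.exp (G z)‖ ≤ Real.exp C := by
    rw [Complex.norm_exp]
    exact Real.exp_le_exp.2 (le_trans (Complex.re_le_norm _) (hC z hz))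
  have hnn : (0:ℝ) ≤ ‖1 - Complex.exp (F n z - G z)‖ := norm_nonneg _
  calc ‖Complex.exp (G z)‖ * ‖1 - Complex.exp (F n z - G z)‖
      ≤ Real.exp C * (2 * ‖F n z - G z‖) := by
        exact mul_le_mul hG hb hnn (le_of_lt (Real.exp_pos C))
    _ < ε := by
        rw [← hdist]
        have h7 := (lt_div_iff₀ hc).1 hd2
        nlinarith [dist_nonneg (x := F n z) (y := G z), Real.exp_pos C]

lemma tu_const_mul {P0 : ℂ → ℂ} {Q : ℕ → ℂ → ℂ} {L : ℂ → ℂ} {s : Set ℂ} {B : ℝ}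
    (hB0 : 0 ≤ B) (hB : ∀ z ∈ s, ‖P0 z‖ ≤ B) (h : TendstoUniformlyOn Q L atTop s) :
    TendstoUniformlyOn (fun n z => P0 z * Q n z) (fun z => P0 z * L z) atTop s := by
  rw [Metric.tendstoUniformlyOn_iff] at h ⊢
  intro ε hε
  filter_upwards [h (ε / (B + 1)) (by positivity)] with n hn z hz
  have h1 := hn z hz
  rw [dist_comm] at h1
  rw [dist_eq_norm] at h1 ⊢
  rw [norm_sub_rev] at h1
  have : P0 z * L z - P0 z * Q n z = P0 z * (L z - Q n z) := by ring
  rw [this, norm_mul]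
  calc ‖P0 z‖ * ‖L z - Q n z‖ ≤ B * ‖L z - Q n z‖ :=
        mul_le_mul_of_nonneg_right (hB z hz) (norm_nonneg _)
    _ ≤ B * (ε / (B + 1)) := mul_le_mul_of_nonneg_left h1.le hB0
    _ < ε := by
        rw [show B * (ε / (B + 1)) = ε * (B / (B + 1)) by ring]
        have hlt : B / (B + 1) < 1 := (div_lt_one (by linarith)).2 (by linarith)
        nlinarith

lemma tu_shift {F : ℕ → ℂ → ℂ} {f : ℂ → ℂ} {s : Set ℂ}
    (h : TendstoUniformlyOn F f atTop s) :
    TendstoUniformlyOn (fun n => F (n + 1)) f atTop s := by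
  intro u hu
  exact (tendsto_add_atTop_nat 1).eventually (h u hu)

lemma tu_local (ν : ℕ → ℤ) {z₀ : ℂ} (hz₀ : ∀ k : ℕ, 1 ≤ k → ν k ≠ 0 → z₀ ≠ (k:ℂ)) :
    ∃ t ∈ nhds z₀, TendstoUniformlyOn (fun n z => wp ν n z) (flim ν) atTop t := by
  classical
  set r : ℝ := ‖z₀‖ + 1 with hrdef
  have hr : 0 < r := by positivity
  have hz₀r : ‖z₀‖ < r := by simp [hrdef]
  set N := NN r with hN
  set Cs : Set ℂ := (fun k : ℕ => (k : ℂ)) '' {k : ℕ | 1 ≤ k ∧ k ≤ N ∧ ν k ≠ 0} with hCs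
  have hCsfin : Cs.Finite := by
    apply Set.Finite.image
    exact (Set.finite_Icc 1 N).subset (fun k hk => Set.mem_Icc.2 ⟨hk.1, hk.2.1⟩)
  set U : Set ℂ := Metric.ball (0:ℂ) r \ Cs with hU
  have hUopen : IsOpen U := Metric.isOpen_ball.sdiff hCsfin.isClosed
  have hz₀U : z₀ ∈ U := by
    constructor
    · rw [Metric.mem_ball, dist_zero_right]; exact hz₀r
    · rintro ⟨k, ⟨hk1, _, hkν⟩, hkz⟩
      exact hz₀ k hk1 hkν hkz.symm
  obtain ⟨δ, hδpos, hδ⟩ : ∃ δ > 0, Metric.closedBall z₀ δ ⊆ U := by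
    rcases Metric.nhds_basis_closedBall.mem_iff.1 (hUopen.mem_nhds hz₀U) with ⟨δ, hδ1, hδ2⟩
    exact ⟨δ, hδ1, hδ2⟩
  refine ⟨Metric.closedBall z₀ δ, Metric.closedBall_mem_nhds _ hδpos, ?_⟩
  have hsub_ball : Metric.closedBall z₀ δ ⊆ Metric.ball (0:ℂ) r :=
    fun z hz => (hδ hz).1
  have hnorm_lt : ∀ z ∈ Metric.closedBall z₀ δ, ‖z‖ < r := by
    intro z hz
    have := hsub_ball hz
    rwa [Metric.mem_ball, dist_zero_right] at this
  -- continuity and boundedness of `wp ν N` on the closed ball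
  have hcont : ContinuousOn (wp ν N) (Metric.closedBall z₀ δ) := by
    apply continuousOn_finset_prod
    intro k hk
    rw [Finset.mem_Icc] at hk
    by_cases hν : ν k = 0
    · simp only [hν, zpow_zero]
      exact continuousOn_const
    · apply ContinuousOn.zpow₀
      · exact ((wf_differentiable _).continuous.comp
          (continuous_id.div_const _)).continuousOn
      · intro z hz
        left
        apply wf_ne_zero
        intro heq
        have hk0 : (k:ℂ) ≠ 0 := Nat.cast_ne_zero.2 (by omega)
        have hzk : z = (k:ℂ) := by
          field_simp at heq
          exact heq
        exact (hδ hz).2 ⟨k, ⟨hk.1, hk.2, hν⟩, hzk.symm⟩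
  obtain ⟨B, hB⟩ := (isCompact_closedBall z₀ δ).exists_bound_of_continuousOn hcont
  have hB0 : 0 ≤ max B 0 := le_max_right _ _
  have hB' : ∀ z ∈ Metric.closedBall z₀ δ, ‖wp ν N z‖ ≤ max B 0 :=
    fun z hz => le_trans (hB z hz) (le_max_left _ _)
  -- uniform convergence of exponentials
  have htu1 : TendstoUniformlyOn (fun n z => ∑ k ∈ Finset.range n, gf ν r k z) (GG ν r)
      atTop (Metric.closedBall z₀ δ) := (tu_sums ν hr).mono hsub_ball
  have htu2 := tu_cexp htu1 (fun z hz => GG_bound ν hr (hnorm_lt z hz))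
  have htu3 := tu_shift htu2
  have htu4 := tu_const_mul hB0 hB' htu3
  have htu5 : TendstoUniformlyOn (fun n z => wp ν n z)
      (fun z => wp ν N z * Complex.exp (GG ν r z)) atTop (Metric.closedBall z₀ δ) := by
    apply htu4.congr
    filter_upwards [eventually_ge_atTop N] with n hn
    intro z hz
    exact (wp_eq ν hr hn (hnorm_lt z hz)).symm
  exact htu5.congr_right fun z hz => (flim_eq ν hr (hnorm_lt z hz)).symm

/-- The product `f_ν(z) = ∏_{k=1}^∞ E_{m_k}(z/k)^{ν(k)}` converges locally uniformly
on the complement of `{k ≥ 1 : ν(k) ≠ 0}` to a function holomorphic and nowhere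
vanishing on `ℂ ∖ {1, 2, 3, …}`. -/
theorem weierstrass_product_converges (ν : ℕ → ℤ) :
    ∃ f : ℂ → ℂ,
      TendstoLocallyUniformlyOn
        (fun n z => ∏ k ∈ Finset.Icc 1 n, weierstrassFactor (mExp ν k) (z / k) ^ (ν k))
        f atTop {z : ℂ | ∀ k : ℕ, 1 ≤ k → ν k ≠ 0 → z ≠ (k : ℂ)} ∧
      DifferentiableOn ℂ f {z : ℂ | ∀ k : ℕ, 1 ≤ k → z ≠ (k : ℂ)} ∧
      ∀ z ∈ {z : ℂ | ∀ k : ℕ, 1 ≤ k → z ≠ (k : ℂ)}, f z ≠ 0 := by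
  refine ⟨flim ν, ?_, ?_, ?_⟩
  · -- locally uniform convergence
    intro u hu x hx
    obtain ⟨t, ht, htu⟩ := tu_local ν hx
    exact ⟨t, mem_nhdsWithin_of_mem_nhds ht, htu u hu⟩
  · -- differentiability
    intro z₀ hz₀
    simp only [Set.mem_setOf_eq] at hz₀
    set r : ℝ := ‖z₀‖ + 1 with hrdef
    have hr : 0 < r := by positivity
    have hz₀r : ‖z₀‖ < r := by simp [hrdef]
    have hball : Metric.ball (0:ℂ) r ∈ nhds z₀ :=
      Metric.isOpen_ball.mem_nhds (by rwa [Metric.mem_ball, dist_zero_right])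
    have heq : flim ν =ᶠ[nhds z₀]
        (fun z => wp ν (NN r) z * Complex.exp (GG ν r z)) := by
      filter_upwards [hball] with z hz
      rw [Metric.mem_ball, dist_zero_right] at hz
      exact flim_eq ν hr hz
    have hdiff : DifferentiableAt ℂ
        (fun z => wp ν (NN r) z * Complex.exp (GG ν r z)) z₀ := by
      apply DifferentiableAt.mul
      · -- wp ν (NN r) differentiable at z₀
        apply DifferentiableAt.fun_finsetProd
        intro k hk
        rw [Finset.mem_Icc] at hk
        by_cases hν : ν k = 0
        · simp only [hν, zpow_zero]
          exact differentiableAt_const 1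
        · have hk0 : (k:ℂ) ≠ 0 := Nat.cast_ne_zero.2 (by omega)
          have hW : DifferentiableAt ℂ
              (fun z => weierstrassFactor (mExp ν k) (z / k)) z₀ :=
            ((wf_differentiable _).differentiableAt).comp z₀
              (differentiableAt_id.div_const _)
          have hne : weierstrassFactor (mExp ν k) (z₀ / k) ≠ 0 := by
            apply wf_ne_zero
            intro hcon
            apply hz₀ k hk.1
            field_simp at hcon
            exact hcon
          exact (differentiableAt_zpow.2 (Or.inl hne)).comp z₀ hW
      · exact (((GG_diff ν hr).differentiableAt hball)).cexp
    exact (hdiff.congr_of_eventuallyEq heq).differentiableWithinAt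
  · -- nonvanishing
    intro z₀ hz₀
    simp only [Set.mem_setOf_eq] at hz₀
    set r : ℝ := ‖z₀‖ + 1 with hrdef
    have hr : 0 < r := by positivity
    have hz₀r : ‖z₀‖ < r := by simp [hrdef]
    rw [flim_eq ν hr hz₀r]
    apply mul_ne_zero ?_ (Complex.exp_ne_zero _)
    rw [wp]
    rw [Finset.prod_ne_zero_iff]
    intro k hk
    rw [Finset.mem_Icc] at hk
    have hk0 : (k:ℂ) ≠ 0 := Nat.cast_ne_zero.2 (by omega)
    apply zpow_ne_zero
    apply wf_ne_zero
    intro hcon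
    apply hz₀ k hk.1
    field_simp at hcon
    exact hcon
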